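/- arXiv:2411.06636 — 5 statements merged into one kernel-verified Lean document; each statement's English description precedes it below -/
import Mathlib

section
/- Let C be a category with pullbacks and suppose the square with sides p : W ⟶ X, q : W ⟶ Y, f : X ⟶ Z, g : Y ⟶ Z (so p ≫ f = q ≫ g) is a pullback square. Then the canonical Beck–Chevalley natural transformation Over.pullback q ⋙ Over.map p ⟶ Over.map g ⋙ Over.pullback f (of functors Over Y ⥤ Over X), obtained as the mate of the natural isomorphism Over.map p ⋙ Over.map f ≅ Over.map q ⋙ Over.map g with respect to the adjunctions Over.map p ⊣ Over.pullback p and Over.map g ⊣ Over.pullback g, is a natural isomorphism. -/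
open CategoryTheory CategoryTheory.Limits

/-- For a pullback square `p ≫ f = q ≫ g` in a category with pullbacks, the
Beck–Chevalley natural transformation
`Over.pullback q ⋙ Over.map p ⟶ Over.map g ⋙ Over.pullback f`, obtained as the mate of
the natural isomorphism `Over.map p ⋙ Over.map f ≅ Over.map q ⋙ Over.map g` with respect
to the adjunctions between `Over.map` and `Over.pullback`, is a natural isomorphism. -/
theorem over_map_pullback_beckChevalley_isIso
    {C : Type*} [Category C] [HasPullbacks C]
    {W X Y Z : C} (p : W ⟶ X) (q : W ⟶ Y) (f : X ⟶ Z) (g : Y ⟶ Z)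
    (comm : p ≫ f = q ≫ g) (hpb : IsPullback p q f g) :
    IsIso ((mateEquiv (Over.mapPullbackAdj q) (Over.mapPullbackAdj f))
      ((Over.mapComp p f).symm ≪≫ Over.mapCongr _ _ comm ≪≫ Over.mapComp q g).hom) := by
  suffices h : ∀ (A : Over Y), IsIso (((mateEquiv (Over.mapPullbackAdj q) (Over.mapPullbackAdj f))
      ((Over.mapComp p f).symm ≪≫ Over.mapCongr _ _ comm ≪≫ Over.mapComp q g).hom).app A) from
    NatIso.isIso_of_isIso_app _
  intro A
  set m := (((mateEquiv (Over.mapPullbackAdj q) (Over.mapPullbackAdj f))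
      ((Over.mapComp p f).symm ≪≫ Over.mapCongr _ _ comm ≪≫ Over.mapComp q g).hom).app A) with hm
  suffices hl : IsIso m.left by
    haveI : IsIso ((Over.forget X).map m) := hl
    exact isIso_of_reflects_iso m (Over.forget X)
  have h1 : IsPullback (pullback.fst A.hom q) (pullback.snd A.hom q ≫ p) (A.hom ≫ g) f :=
    ((IsPullback.of_hasPullback A.hom q).flip.paste_horiz hpb).flip
  have e1 : m.left ≫ pullback.fst (A.hom ≫ g) f = pullback.fst A.hom q := by
    simp [hm, mateEquiv, Over.mapComp, Over.mapCongr]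
    erw [pullback.lift_fst]
    erw [pullback.lift_fst_assoc, pullback.lift_fst_assoc, pullback.lift_fst_assoc, pullback.lift_fst_assoc]
    simp
  have e2 : m.left ≫ pullback.snd (A.hom ≫ g) f = pullback.snd A.hom q ≫ p := by
    simp [hm, mateEquiv, Over.mapComp, Over.mapCongr]
    simp only [pullback.lift_snd, pullback.lift_snd_assoc]
  have : m.left = h1.isoPullback.hom := by
    apply pullback.hom_ext <;> simp [e1, e2]
  rw [this]; infer_instance
end

section
/- Let C be a locally cartesian closed category, i.e., C has finite limits and for every morphism g the base-change functor Over.pullback g has a right adjoint (the pushforward, or dependent product, along g). For every pullback square with sides p : W ⟶ X, q : W ⟶ Y, f : X ⟶ Z, g : Y ⟶ Z (so p ≫ f = q ≫ g), the canonical natural transformation pushforward g ⋙ Over.pullback f ⟶ Over.pullback q ⋙ pushforward p (of functors Over Y ⥤ Over X), obtained as the mate of the Beck–Chevalley isomorphism for the left adjoints with respect to the adjunctions Over.pullback g ⊣ pushforward g and Over.pullback p ⊣ pushforward p, is a natural isomorphism. -/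
open CategoryTheory CategoryTheory.Limits

section Aux

variable {C : Type*} [Category C] [HasPullbacks C]

/-- Beck–Chevalley for the `Over.map ⊣ Over.pullback` adjunctions: the mate of the
(equality-induced) square of `Over.map` functors is an isomorphism when the square is
a pullback. -/
theorem mapPullback_beckChevalley_isIso_aux {W X Y Z : C}
    (p : W ⟶ X) (q : W ⟶ Y) (f : X ⟶ Z) (g : Y ⟶ Z) (hpb : IsPullback p q f g)
    (e : Over.map q ⋙ Over.map g = Over.map p ⋙ Over.map f) :
    IsIso (mateEquiv (Over.mapPullbackAdj p) (Over.mapPullbackAdj g)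
      (eqToHom e : Over.map q ⋙ Over.map g ⟶ Over.map p ⋙ Over.map f)) := by
  have : ∀ x : Over X, IsIso ((mateEquiv (Over.mapPullbackAdj p) (Over.mapPullbackAdj g)
      (eqToHom e : Over.map q ⋙ Over.map g ⟶ Over.map p ⋙ Over.map f)).app x) := by
    intro x
    set c := (mateEquiv (Over.mapPullbackAdj p) (Over.mapPullbackAdj g)
      (eqToHom e : Over.map q ⋙ Over.map g ⟶ Over.map p ⋙ Over.map f)).app x with hc
    have big : IsPullback (pullback.fst x.hom p) (pullback.snd x.hom p ≫ q) (x.hom ≫ f) g :=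
      ((IsPullback.of_hasPullback x.hom p).flip.paste_horiz hpb.flip).flip
    have h1 : c.left ≫ pullback.fst ((Over.map f).obj x).hom g = pullback.fst x.hom p := by
      simp [hc, mateEquiv, Over.eqToHom_left, eqToHom_app]
      rw [pullback.lift_fst]
      erw [pullback.lift_fst_assoc, pullback.lift_fst_assoc, Category.id_comp]
    have h2 : c.left ≫ pullback.snd ((Over.map f).obj x).hom g = pullback.snd x.hom p ≫ q := by
      simp [hc, mateEquiv, Over.eqToHom_left, eqToHom_app]
      erw [pullback.lift_snd, pullback.lift_snd, pullback.lift_snd]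
    have hcl : c.left = big.isoPullback.hom := by
      apply pullback.hom_ext
      · simpa using h1
      · simpa using h2
    have : IsIso c.left := by rw [hcl]; infer_instance
    haveI : IsIso ((Over.forget Y).map c) := this
    exact isIso_of_reflects_iso c (Over.forget Y)
  exact NatIso.isIso_of_isIso_app _

/-- The equality-induced natural transformation between pullback functors is conjugate to the
equality-induced natural transformation between map functors. -/
theorem conj_eqToHom_aux {A B : C} {u v : A ⟶ B} (h : u = v) :
    (eqToHom (congrArg (fun h => Over.pullback h) h) : Over.pullback u ⟶ Over.pullback v) =
      conjugateEquiv (Over.mapPullbackAdj u) (Over.mapPullbackAdj v)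
        (eqToHom (congrArg (fun h => Over.map h) h.symm)) := by
  subst h
  simp [conjugateEquiv_id]

/-- The Beck–Chevalley isomorphism of pullback functors is the conjugate of the
equality-induced square of map functors. -/
theorem pullback_beckChevalley_eq_conj_aux {W X Y Z : C}
    (p : W ⟶ X) (q : W ⟶ Y) (f : X ⟶ Z) (g : Y ⟶ Z) (hpb : IsPullback p q f g)
    (e : Over.map q ⋙ Over.map g = Over.map p ⋙ Over.map f) :
    ((Over.pullbackComp p f).symm ≪≫
        eqToIso (congrArg (fun h => Over.pullback h) hpb.w) ≪≫
        Over.pullbackComp q g).hom =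
      conjugateEquiv ((Over.mapPullbackAdj p).comp (Over.mapPullbackAdj f))
        ((Over.mapPullbackAdj q).comp (Over.mapPullbackAdj g))
        (eqToHom e : Over.map q ⋙ Over.map g ⟶ Over.map p ⋙ Over.map f) := by
  rw [Iso.trans_hom, Iso.trans_hom, Iso.symm_hom, eqToIso.hom, conj_eqToHom_aux hpb.w]
  show (Over.pullbackComp p f).inv ≫ _ ≫ (Over.pullbackComp q g).hom = _
  rw [Over.pullbackComp, Over.pullbackComp, conjugateIsoEquiv_apply_inv,
    conjugateIsoEquiv_apply_hom, conjugateEquiv_comp, conjugateEquiv_comp]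
  congr 1
  ext x
  simp [eqToHom_app, Over.eqToHom_left]

end Aux

/-- Let `C` be locally cartesian closed: it has finite limits and every base-change functor
`Over.pullback g` has a right adjoint `pushforward g`.  For every pullback square
`p ≫ f = q ≫ g`, the mate of the Beck–Chevalley isomorphism
`Over.pullback f ⋙ Over.pullback p ≅ Over.pullback g ⋙ Over.pullback q` for the left
adjoints, taken with respect to the adjunctions `Over.pullback g ⊣ pushforward g` and
`Over.pullback p ⊣ pushforward p`, is a natural isomorphism
`pushforward g ⋙ Over.pullback f ⟶ Over.pullback q ⋙ pushforward p`. -/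
theorem pushforward_beckChevalley_isIso
    {C : Type*} [Category C] [HasFiniteLimits C]
    (pushforward : ∀ {x y : C}, (x ⟶ y) → (Over x ⥤ Over y))
    (adj : ∀ {x y : C} (f : x ⟶ y), Over.pullback f ⊣ pushforward f)
    {W X Y Z : C} (p : W ⟶ X) (q : W ⟶ Y) (f : X ⟶ Z) (g : Y ⟶ Z)
    (hpb : IsPullback p q f g) :
    IsIso ((mateEquiv (adj g) (adj p))
      ((Over.pullbackComp p f).symm ≪≫
        eqToIso (congrArg (fun h => Over.pullback h) hpb.w) ≪≫
        Over.pullbackComp q g).hom) := by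
  have e : Over.map q ⋙ Over.map g = Over.map p ⋙ Over.map f := by
    rw [← Over.mapComp_eq, ← Over.mapComp_eq, hpb.w]
  set M : Over.map q ⋙ Over.map g ⟶ Over.map p ⋙ Over.map f := eqToHom e with hM
  set μ := mateEquiv (Over.mapPullbackAdj p) (Over.mapPullbackAdj g) M with hμ
  haveI : IsIso μ := mapPullback_beckChevalley_isIso_aux p q f g hpb e
  have hα : ((Over.pullbackComp p f).symm ≪≫
        eqToIso (congrArg (fun h => Over.pullback h) hpb.w) ≪≫
        Over.pullbackComp q g).hom =
      mateEquiv (Over.mapPullbackAdj f) (Over.mapPullbackAdj q) μ := by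
    rw [hμ]
    exact (pullback_beckChevalley_eq_conj_aux p q f g hpb e).trans
      (iterated_mateEquiv_conjugateEquiv _ _ _ _ _).symm
  rw [hα]
  change IsIso (TwoSquare.natTrans _)
  rw [iterated_mateEquiv_conjugateEquiv (Over.mapPullbackAdj f) (Over.mapPullbackAdj q)
    (adj p) (adj g)]
  exact conjugateEquiv_iso (α := μ) ..
end

section
/- Let C be a category with finite limits that has a subobject classifier. Then for every object x : C, the slice category Over x has a subobject classifier (given by the projection from the product of x with the subobject classifier of C onto x). -/
open CategoryTheory CategoryTheory.Limits

/-- A subobject classifier in a category with a terminal object: an object `Ω` together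
with a morphism `truth : ⊤_ C ⟶ Ω` such that every monomorphism `m : a ⟶ b` is the
pullback of `truth` along a unique characteristic morphism `χ : b ⟶ Ω`. -/
structure Classifier (C : Type*) [Category C] [HasTerminal C] where
  /-- The object of truth values. -/
  Ω : C
  /-- The truth morphism. -/
  truth : ⊤_ C ⟶ Ω
  /-- Every mono is the pullback of `truth` along a unique characteristic morphism. -/
  classifies : ∀ {a b : C} (m : a ⟶ b) [Mono m],
    ∃! χ : b ⟶ Ω, IsPullback (terminal.from a) m truth χ

section Aux

variable {C : Type*} [Category C] [HasFiniteLimits C]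

/-- The basic pullback square: `prod.lift (𝟙 x) (terminal.from x ≫ truth)` is the pullback
of `truth` along `prod.snd : x ⨯ Ω ⟶ Ω`. -/
lemma classifier_snd_isPullback (c : _root_.Classifier C) (x : C) :
    IsPullback (terminal.from x) (prod.lift (𝟙 x) (terminal.from x ≫ c.truth)) c.truth
      (prod.snd : x ⨯ c.Ω ⟶ c.Ω) := by
  refine IsPullback.of_isLimit' ⟨by simp [prod.lift_snd]⟩
    (PullbackCone.IsLimit.mk _ (fun s => s.snd ≫ prod.fst) (fun s => Subsingleton.elim _ _)
      (fun s => ?_) (fun s m h₁ h₂ => ?_))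
  · apply Limits.prod.hom_ext
    · simp [prod.lift_fst]
    · have h1 : (s.snd ≫ prod.fst) ≫ terminal.from x = terminal.from s.pt :=
        Subsingleton.elim _ _
      have h2 : s.fst = terminal.from s.pt := Subsingleton.elim _ _
      simp only [Category.assoc, prod.lift_snd]
      rw [reassoc_of% h1, ← h2, s.condition]
  · have := h₂ =≫ prod.fst
    simpa [prod.lift_fst] using this

end Aux

/-- If a category `C` with finite limits has a subobject classifier, then every slice
category `Over x` has a subobject classifier, whose object of truth values is the
projection `x ⨯ Ω ⟶ x` from the product of `x` with the subobject classifier of `C`. -/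
theorem over_hasClassifier
    {C : Type*} [Category C] [HasFiniteLimits C] (c : _root_.Classifier C) (x : C) :
    ∃ cl : _root_.Classifier (Over x), cl.Ω = Over.mk (Limits.prod.fst : x ⨯ c.Ω ⟶ x) := by
  -- the terminal object of `Over x` has an iso structure map to `x`
  haveI hT : IsIso (⊤_ (Over x)).hom := by
    let e : (⊤_ (Over x)) ≅ Over.mk (𝟙 x) := terminalIsTerminal.uniqueUpToIso Over.mkIdTerminal
    have h1 : IsIso e.hom.left := (inferInstance : IsIso ((Over.forget x).map e.hom))
    have h2 : e.hom.left = (⊤_ (Over x)).hom := by simpa using Over.w e.hom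
    rwa [h2] at h1
  -- the truth morphism at the level of `C`
  set w : (⊤_ (Over x)).left ⟶ x ⨯ c.Ω :=
    (⊤_ (Over x)).hom ≫ prod.lift (𝟙 x) (terminal.from x ≫ c.truth) with hw
  -- the transported basic pullback square
  have S2 : IsPullback (terminal.from (⊤_ (Over x)).left) w c.truth
      (prod.snd : x ⨯ c.Ω ⟶ c.Ω) := by
    refine (classifier_snd_isPullback c x).of_iso (asIso (⊤_ (Over x)).hom).symm
      (Iso.refl _) (Iso.refl _) (Iso.refl _) (Subsingleton.elim _ _) ?_ (by simp) (by simp)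
    simp [w]
  refine ⟨⟨Over.mk (Limits.prod.fst : x ⨯ c.Ω ⟶ x),
    Over.homMk w (by simp [w, prod.lift_fst]), ?_⟩, rfl⟩
  intro a b m hm
  obtain ⟨χ, hχ, huniq⟩ := c.classifies m.left
  have h1 : (terminal.from a).left ≫ terminal.from (⊤_ (Over x)).left = terminal.from a.left :=
    Subsingleton.elim _ _
  -- commutativity of the square in `C`
  have hcomm : (terminal.from a).left ≫ w = m.left ≫ prod.lift b.hom χ := by
    apply Limits.prod.hom_ext
    · have := Over.w (terminal.from a)
      have := Over.w m
      simp_all [w, prod.lift_fst]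
    · have h2 : (terminal.from a).left ≫ (⊤_ (Over x)).hom ≫ terminal.from x =
          terminal.from a.left := Subsingleton.elim _ _
      simp only [w, Category.assoc, prod.lift_snd, prod.lift_snd]
      rw [reassoc_of% h2, hχ.w]
  refine ⟨Over.homMk (prod.lift b.hom χ) (by simp [prod.lift_fst]), ?_, ?_⟩
  · apply IsPullback.of_map (Over.forget x)
    · ext
      simpa using hcomm
    · have s : IsPullback ((terminal.from a).left ≫ terminal.from (⊤_ (Over x)).left)
          m.left c.truth (prod.lift b.hom χ ≫ prod.snd) := by
        rw [h1, prod.lift_snd]; exact hχ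
      simpa using s.of_right hcomm S2
  · intro χ'' h''
    have hC := h''.map (Over.forget x)
    simp only [Over.forget_map, Over.homMk_left] at hC
    have big := hC.paste_horiz S2
    erw [h1] at big
    have hs := huniq _ big
    ext
    apply Limits.prod.hom_ext
    · simpa [prod.lift_fst] using Over.w χ''
    · simpa [prod.lift_snd] using hs
end

section
/- Let C be a category with finite limits and binary coproducts such that for every morphism f : x ⟶ y the base-change functor Over.pullback f : Over y ⥤ Over x preserves binary coproducts. Then for every object x : C, the slice category Over x has binary coproducts and the forgetful functor Over x ⥤ C preserves them; moreover, for every morphism g in Over x, the base-change functor along g in Over x preserves binary coproducts. -/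
open CategoryTheory CategoryTheory.Limits

/-- The two candidate left adjoints are naturally isomorphic. -/
def auxLeftIso {C : Type*} [Category C] {x : C} {a b : Over x} (g : a ⟶ b) :
    a.iteratedSliceBackward ⋙ Over.map g ≅ Over.map g.left ⋙ b.iteratedSliceBackward :=
  NatIso.ofComponents
    (fun h => Over.isoMk (Over.isoMk (Iso.refl _) (by simp [Over.iteratedSliceBackward, ← Over.w g])) (by ext; simp [Over.iteratedSliceBackward]))
    (fun f => by ext; simp [Over.iteratedSliceBackward])

/-- Let `C` be a category with finite limits and binary coproducts such that every
base-change functor `Over.pullback f` preserves binary coproducts.  Then every slice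
category `Over x` has binary coproducts, the forgetful functor `Over x ⥤ C` preserves
them, and every base-change functor in `Over x` preserves binary coproducts. -/
theorem over_hasBinaryCoproducts
    {C : Type*} [Category C] [HasFiniteLimits C] [HasBinaryCoproducts C]
    (hpres : ∀ {x y : C} (f : x ⟶ y),
      PreservesColimitsOfShape (Discrete WalkingPair) (Over.pullback f))
    (x : C) :
    HasBinaryCoproducts (Over x) ∧
      PreservesColimitsOfShape (Discrete WalkingPair) (Over.forget x) ∧
      ∀ {a b : Over x} (g : a ⟶ b),
        PreservesColimitsOfShape (Discrete WalkingPair) (Over.pullback g) := by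
  refine ⟨inferInstance, inferInstance, fun {a b} g => ?_⟩
  -- conjugate the isomorphism of left adjoints to an isomorphism of right adjoints
  have adj1 : (a.iteratedSliceBackward ⋙ Over.map g) ⊣
      (Over.pullback g ⋙ a.iteratedSliceForward) :=
    (a.iteratedSliceEquiv.symm.toAdjunction).comp (Over.mapPullbackAdj g)
  have adj2 : (Over.map g.left ⋙ b.iteratedSliceBackward) ⊣
      (b.iteratedSliceForward ⋙ Over.pullback g.left) :=
    (Over.mapPullbackAdj g.left).comp (b.iteratedSliceEquiv.symm.toAdjunction)
  have e : (Over.pullback g ⋙ a.iteratedSliceForward) ≅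
      (b.iteratedSliceForward ⋙ Over.pullback g.left) :=
    conjugateIsoEquiv adj1 adj2 (auxLeftIso g).symm
  have e2 : Over.pullback g ≅
      (b.iteratedSliceForward ⋙ Over.pullback g.left) ⋙ a.iteratedSliceBackward :=
    (Functor.rightUnitor _).symm ≪≫
      Functor.isoWhiskerLeft (Over.pullback g) a.iteratedSliceEquiv.unitIso ≪≫
      (Functor.associator _ _ _).symm ≪≫ Functor.isoWhiskerRight e a.iteratedSliceBackward
  haveI := hpres g.left
  haveI : PreservesColimitsOfShape (Discrete WalkingPair)
      ((b.iteratedSliceForward ⋙ Over.pullback g.left) ⋙ a.iteratedSliceBackward) := by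
    haveI : b.iteratedSliceForward.IsEquivalence := b.iteratedSliceEquiv.isEquivalence_functor
    haveI : a.iteratedSliceBackward.IsEquivalence :=
      a.iteratedSliceEquiv.isEquivalence_inverse
    infer_instance
  exact preservesColimitsOfShape_of_natIso e2.symm
end

section
/- Let B₁ and B₂ be bicategories, let F, G : B₁ ⥤ B₂ be pseudofunctors, and let τ : F ⟶ G be a strong natural transformation such that for every object x : B₁ the component τ_x : F x ⟶ G x is an equivalence in B₂ (i.e., part of an adjoint equivalence). Then τ is an equivalence in the bicategory of pseudofunctors: there exists a strong natural transformation σ : G ⟶ F together with invertible modifications between τ ≫ σ and the identity transformation of F, and between σ ≫ τ and the identity transformation of G. -/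
open CategoryTheory

open scoped Pseudofunctor.StrongTrans

open CategoryTheory Category Bicategory
open scoped Bicategory

namespace PseudoEquivAux

variable {B₁ B₂ : Type*} [Bicategory B₁] [Bicategory B₂]
variable {F G : Pseudofunctor B₁ B₂} (τ : F ⟶ G)

/-- The naturality isomorphism of `τ`, with a cleanly stated type. -/
abbrev N {a b : B₁} (f : a ⟶ b) : F.map f ≫ τ.app b ≅ τ.app a ≫ G.map f := τ.naturality f

lemma N_nat {a b : B₁} {f g : a ⟶ b} (η : f ⟶ g) :
    F.map₂ η ▷ τ.app b ≫ (N τ g).hom = (N τ f).hom ≫ τ.app a ◁ G.map₂ η :=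
  τ.naturality_naturality η

lemma N_id (a : B₁) :
    (N τ (𝟙 a)).hom ≫ τ.app a ◁ (G.mapId a).hom =
      (F.mapId a).hom ▷ τ.app a ≫ (λ_ (τ.app a)).hom ≫ (ρ_ (τ.app a)).inv :=
  τ.naturality_id a

lemma N_comp {a b d : B₁} (f : a ⟶ b) (g : b ⟶ d) :
    (N τ (f ≫ g)).hom ≫ τ.app a ◁ (G.mapComp f g).hom =
      (F.mapComp f g).hom ▷ τ.app d ≫ (α_ _ _ _).hom ≫ F.map f ◁ (N τ g).hom ≫
        (α_ _ _ _).inv ≫ (N τ f).hom ▷ G.map g ≫ (α_ _ _ _).hom :=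
  τ.naturality_comp f g

variable (i : ∀ x : B₁, G.obj x ⟶ F.obj x)
variable (u : ∀ x : B₁, 𝟙 (F.obj x) ≅ τ.app x ≫ i x)
variable (c : ∀ x : B₁, i x ≫ τ.app x ≅ 𝟙 (G.obj x))

lemma N_inv_nat {a b : B₁} {f g : a ⟶ b} (η : f ⟶ g) :
    τ.app a ◁ G.map₂ η ≫ (N τ g).inv = (N τ f).inv ≫ F.map₂ η ▷ τ.app b := by
  rw [← cancel_epi (N τ f).hom, ← cancel_mono (N τ g).hom]
  simp [N_nat τ η]

lemma N_inv_id (a : B₁) :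
    (N τ (𝟙 a)).inv =
      τ.app a ◁ (G.mapId a).hom ≫ (ρ_ _).hom ≫ (λ_ _).inv ≫ (F.mapId a).inv ▷ τ.app a := by
  rw [← cancel_epi (N τ (𝟙 a)).hom, Iso.hom_inv_id, reassoc_of% (N_id τ a)]
  simp

lemma N_inv_comp {a b d : B₁} (f : a ⟶ b) (g : b ⟶ d) :
    (N τ (f ≫ g)).inv =
      τ.app a ◁ (G.mapComp f g).hom ≫ (α_ _ _ _).inv ≫ (N τ f).inv ▷ G.map g ≫
        (α_ _ _ _).hom ≫ F.map f ◁ (N τ g).inv ≫ (α_ _ _ _).inv ≫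
          (F.mapComp f g).inv ▷ τ.app d := by
  rw [← cancel_epi (N τ (f ≫ g)).hom, Iso.hom_inv_id, reassoc_of% (N_comp τ f g)]
  simp

/-- The inverse naturality 2-isomorphism, obtained as the mate of the naturality
2-isomorphism of `τ`. -/
def invNat {a b : B₁} (f : a ⟶ b) : G.map f ≫ i b ≅ i a ≫ F.map f :=
  (λ_ _).symm ≪≫ whiskerRightIso (c a).symm _ ≪≫ α_ _ _ _ ≪≫
    whiskerLeftIso (i a) ((α_ _ _ _).symm ≪≫ whiskerRightIso (N τ f).symm (i b) ≪≫
      α_ _ _ _ ≪≫ whiskerLeftIso (F.map f) (u b).symm ≪≫ ρ_ _)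

lemma invNat_hom {a b : B₁} (f : a ⟶ b) :
    (invNat τ i u c f).hom =
      𝟙 _ ⊗≫ (c a).inv ▷ (G.map f ≫ i b) ⊗≫ i a ◁ (N τ f).inv ▷ i b ⊗≫
        (i a ≫ F.map f) ◁ (u b).inv ⊗≫ 𝟙 _ := by
  dsimp [invNat]
  simp only [Iso.trans_hom, Iso.symm_hom, whiskerRightIso_hom, whiskerLeftIso_hom]
  bicategory


lemma sigma_nat {a b : B₁} {f g : a ⟶ b} (η : f ⟶ g) :
    G.map₂ η ▷ i b ≫ (invNat τ i u c g).hom =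
      (invNat τ i u c f).hom ≫ i a ◁ F.map₂ η := by
  rw [invNat_hom, invNat_hom]
  calc G.map₂ η ▷ i b ≫
        (𝟙 _ ⊗≫ (c a).inv ▷ (G.map g ≫ i b) ⊗≫ i a ◁ (N τ g).inv ▷ i b ⊗≫
          (i a ≫ F.map g) ◁ (u b).inv ⊗≫ 𝟙 _)
      = 𝟙 _ ⊗≫ (𝟙 (G.obj a) ◁ (G.map₂ η ▷ i b) ≫ (c a).inv ▷ (G.map g ≫ i b)) ⊗≫
          i a ◁ (N τ g).inv ▷ i b ⊗≫ (i a ≫ F.map g) ◁ (u b).inv ⊗≫ 𝟙 _ := by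
        bicategory
    _ = 𝟙 _ ⊗≫ (c a).inv ▷ (G.map f ≫ i b) ⊗≫
          i a ◁ ((τ.app a ◁ G.map₂ η ≫ (N τ g).inv) ▷ i b) ⊗≫
          (i a ≫ F.map g) ◁ (u b).inv ⊗≫ 𝟙 _ := by
        rw [whisker_exchange]; bicategory
    _ = 𝟙 _ ⊗≫ (c a).inv ▷ (G.map f ≫ i b) ⊗≫ i a ◁ (N τ f).inv ▷ i b ⊗≫
          i a ◁ (F.map₂ η ▷ (τ.app b ≫ i b) ≫ F.map g ◁ (u b).inv) ⊗≫ 𝟙 _ := by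
        rw [N_inv_nat]; bicategory
    _ = 𝟙 _ ⊗≫ (c a).inv ▷ (G.map f ≫ i b) ⊗≫ i a ◁ (N τ f).inv ▷ i b ⊗≫
          i a ◁ (F.map f ◁ (u b).inv ≫ F.map₂ η ▷ 𝟙 (F.obj b)) ⊗≫ 𝟙 _ := by
        rw [← whisker_exchange]
    _ = (𝟙 _ ⊗≫ (c a).inv ▷ (G.map f ≫ i b) ⊗≫ i a ◁ (N τ f).inv ▷ i b ⊗≫
          (i a ≫ F.map f) ◁ (u b).inv ⊗≫ 𝟙 _) ≫ i a ◁ F.map₂ η := by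
        bicategory

section Zig
variable {X Y : B₂} {t : X ⟶ Y} {j : Y ⟶ X} (uu : 𝟙 X ≅ t ≫ j) (cc : j ≫ t ≅ 𝟙 Y)

lemma zigzagR_inv
    (rtri : j ◁ uu.hom ≫ (α_ j t j).inv ≫ cc.hom ▷ j = (ρ_ j).hom ≫ (λ_ j).inv) :
    cc.inv ▷ j ⊗≫ j ◁ uu.inv = (λ_ j).hom ≫ (ρ_ j).inv := by
  calc cc.inv ▷ j ⊗≫ j ◁ uu.inv
      = 𝟙 _ ⊗≫ cc.inv ▷ j ⊗≫ j ◁ uu.inv ⊗≫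
          (j ◁ uu.hom ≫ (α_ j t j).inv ≫ cc.hom ▷ j) ⊗≫ ((λ_ j).hom ≫ (ρ_ j).inv) := by
        rw [rtri]; bicategory
    _ = 𝟙 _ ⊗≫ cc.inv ▷ j ⊗≫ j ◁ (uu.inv ≫ uu.hom) ⊗≫ cc.hom ▷ j ⊗≫
          ((λ_ j).hom ≫ (ρ_ j).inv) := by bicategory
    _ = 𝟙 _ ⊗≫ (cc.inv ≫ cc.hom) ▷ j ⊗≫ ((λ_ j).hom ≫ (ρ_ j).inv) := by
          rw [Iso.inv_hom_id]; bicategory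
    _ = (λ_ j).hom ≫ (ρ_ j).inv := by rw [Iso.inv_hom_id]; bicategory

lemma zigzagL_inv
    (tri : uu.hom ▷ t ≫ (α_ t j t).hom ≫ t ◁ cc.hom = (λ_ t).hom ≫ (ρ_ t).inv) :
    t ◁ cc.inv ⊗≫ uu.inv ▷ t = (ρ_ t).hom ≫ (λ_ t).inv := by
  calc t ◁ cc.inv ⊗≫ uu.inv ▷ t
      = 𝟙 _ ⊗≫ t ◁ cc.inv ⊗≫ uu.inv ▷ t ⊗≫
          (uu.hom ▷ t ≫ (α_ t j t).hom ≫ t ◁ cc.hom) ⊗≫ ((ρ_ t).hom ≫ (λ_ t).inv) := by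
        rw [tri]; bicategory
    _ = 𝟙 _ ⊗≫ t ◁ cc.inv ⊗≫ (uu.inv ≫ uu.hom) ▷ t ⊗≫ t ◁ cc.hom ⊗≫
          ((ρ_ t).hom ≫ (λ_ t).inv) := by bicategory
    _ = 𝟙 _ ⊗≫ t ◁ (cc.inv ≫ cc.hom) ⊗≫ ((ρ_ t).hom ≫ (λ_ t).inv) := by
          rw [Iso.inv_hom_id]; bicategory
    _ = (ρ_ t).hom ≫ (λ_ t).inv := by rw [Iso.inv_hom_id]; bicategory

lemma counit_whisker
    (tri : uu.hom ▷ t ≫ (α_ t j t).hom ≫ t ◁ cc.hom = (λ_ t).hom ≫ (ρ_ t).inv) :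
    t ◁ cc.hom = 𝟙 _ ⊗≫ uu.inv ▷ t ⊗≫ 𝟙 _ := by
  calc t ◁ cc.hom
      = 𝟙 _ ⊗≫ (uu.inv ≫ uu.hom) ▷ t ⊗≫ t ◁ cc.hom := by rw [Iso.inv_hom_id]; bicategory
    _ = 𝟙 _ ⊗≫ uu.inv ▷ t ⊗≫ (uu.hom ▷ t ≫ (α_ t j t).hom ≫ t ◁ cc.hom) := by bicategory
    _ = 𝟙 _ ⊗≫ uu.inv ▷ t ⊗≫ ((λ_ t).hom ≫ (ρ_ t).inv) := by rw [tri]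
    _ = 𝟙 _ ⊗≫ uu.inv ▷ t ⊗≫ 𝟙 _ := by bicategory

lemma unit_whisker
    (tri : uu.hom ▷ t ≫ (α_ t j t).hom ≫ t ◁ cc.hom = (λ_ t).hom ≫ (ρ_ t).inv) :
    uu.inv ▷ t = 𝟙 _ ⊗≫ (t ◁ cc.hom ≫ (ρ_ t).hom ≫ (λ_ t).inv) := by
  rw [counit_whisker uu cc tri]; bicategory

end Zig

lemma sigma_id (a : B₁)
    (rtri : i a ◁ (u a).hom ≫ (α_ (i a) (τ.app a) (i a)).inv ≫ (c a).hom ▷ i a =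
      (ρ_ (i a)).hom ≫ (λ_ (i a)).inv) :
    (invNat τ i u c (𝟙 a)).hom ≫ i a ◁ (F.mapId a).hom =
      (G.mapId a).hom ▷ i a ≫ (λ_ (i a)).hom ≫ (ρ_ (i a)).inv := by
  rw [invNat_hom, N_inv_id]
  calc (𝟙 _ ⊗≫ (c a).inv ▷ (G.map (𝟙 a) ≫ i a) ⊗≫
          i a ◁ (τ.app a ◁ (G.mapId a).hom ≫ (ρ_ (τ.app a)).hom ≫ (λ_ (τ.app a)).inv ≫
            (F.mapId a).inv ▷ τ.app a) ▷ i a ⊗≫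
          (i a ≫ F.map (𝟙 a)) ◁ (u a).inv ⊗≫ 𝟙 _) ≫ i a ◁ (F.mapId a).hom
      = 𝟙 _ ⊗≫ (c a).inv ▷ (G.map (𝟙 a) ≫ i a) ⊗≫
          i a ◁ ((τ.app a ◁ (G.mapId a).hom ≫ (ρ_ (τ.app a)).hom) ▷ i a) ⊗≫
          i a ◁ ((λ_ (τ.app a)).inv ▷ i a ≫ (α_ (𝟙 (F.obj a)) (τ.app a) (i a)).hom ≫
            ((F.mapId a).inv ▷ (τ.app a ≫ i a) ≫ F.map (𝟙 a) ◁ (u a).inv)) ⊗≫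
          i a ◁ (F.mapId a).hom ⊗≫ 𝟙 _ := by bicategory
    _ = 𝟙 _ ⊗≫ (c a).inv ▷ (G.map (𝟙 a) ≫ i a) ⊗≫
          i a ◁ ((τ.app a ◁ (G.mapId a).hom ≫ (ρ_ (τ.app a)).hom) ▷ i a) ⊗≫
          i a ◁ ((λ_ (τ.app a)).inv ▷ i a ≫ (α_ (𝟙 (F.obj a)) (τ.app a) (i a)).hom ≫
            (𝟙 (F.obj a) ◁ (u a).inv ≫ (F.mapId a).inv ▷ 𝟙 (F.obj a))) ⊗≫
          i a ◁ (F.mapId a).hom ⊗≫ 𝟙 _ := by rw [← whisker_exchange]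
    _ = 𝟙 _ ⊗≫ (c a).inv ▷ (G.map (𝟙 a) ≫ i a) ⊗≫
          i a ◁ ((τ.app a ◁ (G.mapId a).hom ≫ (ρ_ (τ.app a)).hom) ▷ i a) ⊗≫
          i a ◁ (u a).inv ⊗≫ i a ◁ ((F.mapId a).inv ≫ (F.mapId a).hom) ⊗≫ 𝟙 _ := by
        bicategory
    _ = 𝟙 _ ⊗≫ ((c a).inv ▷ (G.map (𝟙 a) ≫ i a) ≫
          (i a ≫ τ.app a) ◁ ((G.mapId a).hom ▷ i a)) ⊗≫
          (i a ≫ τ.app a) ◁ (λ_ (i a)).hom ⊗≫ i a ◁ (u a).inv ⊗≫ 𝟙 _ := by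
        rw [Iso.inv_hom_id]; bicategory
    _ = 𝟙 _ ⊗≫ (𝟙 (G.obj a) ◁ ((G.mapId a).hom ▷ i a) ≫
          (c a).inv ▷ (𝟙 (G.obj a) ≫ i a)) ⊗≫
          (i a ≫ τ.app a) ◁ (λ_ (i a)).hom ⊗≫ i a ◁ (u a).inv ⊗≫ 𝟙 _ := by
        rw [← whisker_exchange]
    _ = (G.mapId a).hom ▷ i a ≫ ((c a).inv ▷ i a ⊗≫ i a ◁ (u a).inv) := by bicategory
    _ = (G.mapId a).hom ▷ i a ≫ (λ_ (i a)).hom ≫ (ρ_ (i a)).inv := by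
        rw [zigzagR_inv (u a) (c a) rtri]

section Comp
variable {a b d : B₁} (f : a ⟶ b) (g : b ⟶ d)

/-- common normal form for the two sides of `naturality_comp` -/
noncomputable abbrev compNF :=
  𝟙 (G.map (f ≫ g) ≫ i d) ⊗≫ (c a).inv ▷ (G.map (f ≫ g) ≫ i d) ⊗≫
    i a ◁ ((τ.app a ◁ (G.mapComp f g).hom) ▷ i d) ⊗≫
    i a ◁ ((N τ f).inv ▷ (G.map g ≫ i d)) ⊗≫
    i a ◁ (F.map f ◁ ((N τ g).inv ▷ i d)) ⊗≫
    i a ◁ ((F.map f ≫ F.map g) ◁ (u d).inv) ⊗≫ 𝟙 (i a ≫ F.map f ≫ F.map g)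

lemma sigma_comp_lhs :
    (invNat τ i u c (f ≫ g)).hom ≫ i a ◁ (F.mapComp f g).hom = compNF τ i u c f g := by
  rw [invNat_hom, N_inv_comp]
  calc (𝟙 _ ⊗≫ (c a).inv ▷ (G.map (f ≫ g) ≫ i d) ⊗≫
          i a ◁ (τ.app a ◁ (G.mapComp f g).hom ≫ (α_ _ _ _).inv ≫
            (N τ f).inv ▷ G.map g ≫ (α_ _ _ _).hom ≫ F.map f ◁ (N τ g).inv ≫
            (α_ _ _ _).inv ≫ (F.mapComp f g).inv ▷ τ.app d) ▷ i d ⊗≫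
          (i a ≫ F.map (f ≫ g)) ◁ (u d).inv ⊗≫ 𝟙 _) ≫ i a ◁ (F.mapComp f g).hom
      = 𝟙 _ ⊗≫ (c a).inv ▷ (G.map (f ≫ g) ≫ i d) ⊗≫
          i a ◁ ((τ.app a ◁ (G.mapComp f g).hom) ▷ i d) ⊗≫
          i a ◁ ((N τ f).inv ▷ (G.map g ≫ i d)) ⊗≫
          i a ◁ (F.map f ◁ ((N τ g).inv ▷ i d)) ⊗≫
          i a ◁ ((F.mapComp f g).inv ▷ (τ.app d ≫ i d) ≫ F.map (f ≫ g) ◁ (u d).inv) ⊗≫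
          i a ◁ (F.mapComp f g).hom ⊗≫ 𝟙 _ := by bicategory
    _ = 𝟙 _ ⊗≫ (c a).inv ▷ (G.map (f ≫ g) ≫ i d) ⊗≫
          i a ◁ ((τ.app a ◁ (G.mapComp f g).hom) ▷ i d) ⊗≫
          i a ◁ ((N τ f).inv ▷ (G.map g ≫ i d)) ⊗≫
          i a ◁ (F.map f ◁ ((N τ g).inv ▷ i d)) ⊗≫
          i a ◁ ((F.map f ≫ F.map g) ◁ (u d).inv ≫ (F.mapComp f g).inv ▷ 𝟙 (F.obj d)) ⊗≫
          i a ◁ (F.mapComp f g).hom ⊗≫ 𝟙 _ := by rw [← whisker_exchange]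
    _ = 𝟙 _ ⊗≫ (c a).inv ▷ (G.map (f ≫ g) ≫ i d) ⊗≫
          i a ◁ ((τ.app a ◁ (G.mapComp f g).hom) ▷ i d) ⊗≫
          i a ◁ ((N τ f).inv ▷ (G.map g ≫ i d)) ⊗≫
          i a ◁ (F.map f ◁ ((N τ g).inv ▷ i d)) ⊗≫
          i a ◁ ((F.map f ≫ F.map g) ◁ (u d).inv) ⊗≫
          i a ◁ ((F.mapComp f g).inv ≫ (F.mapComp f g).hom) ⊗≫ 𝟙 _ := by bicategory
    _ = compNF τ i u c f g := by rw [Iso.inv_hom_id]; bicategory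

lemma sigma_comp_rhs
    (trib : (u b).hom ▷ τ.app b ≫ (α_ (τ.app b) (i b) (τ.app b)).hom ≫ τ.app b ◁ (c b).hom =
      (λ_ (τ.app b)).hom ≫ (ρ_ (τ.app b)).inv) :
    (G.mapComp f g).hom ▷ i d ≫ (α_ (G.map f) (G.map g) (i d)).hom ≫
        G.map f ◁ (invNat τ i u c g).hom ≫ (α_ (G.map f) (i b) (F.map g)).inv ≫
        (invNat τ i u c f).hom ▷ F.map g ≫ (α_ (i a) (F.map f) (F.map g)).hom =
      compNF τ i u c f g := by
  rw [invNat_hom τ i u c f]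
  calc (G.mapComp f g).hom ▷ i d ≫ (α_ (G.map f) (G.map g) (i d)).hom ≫
        G.map f ◁ (invNat τ i u c g).hom ≫ (α_ (G.map f) (i b) (F.map g)).inv ≫
        (𝟙 _ ⊗≫ (c a).inv ▷ (G.map f ≫ i b) ⊗≫ i a ◁ (N τ f).inv ▷ i b ⊗≫
          (i a ≫ F.map f) ◁ (u b).inv ⊗≫ 𝟙 _) ▷ F.map g ≫ (α_ (i a) (F.map f) (F.map g)).hom
      = 𝟙 _ ⊗≫ (𝟙 (G.obj a) ◁ ((G.mapComp f g).hom ▷ i d ≫ (α_ (G.map f) (G.map g) (i d)).hom ≫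
            G.map f ◁ (invNat τ i u c g).hom ≫ (α_ (G.map f) (i b) (F.map g)).inv) ≫
          (c a).inv ▷ ((G.map f ≫ i b) ≫ F.map g)) ⊗≫
          i a ◁ ((N τ f).inv ▷ (i b ≫ F.map g)) ⊗≫
          i a ◁ (F.map f ◁ ((u b).inv ▷ F.map g ≫ (λ_ (F.map g)).hom)) ⊗≫ 𝟙 _ := by
        bicategory
    _ = 𝟙 _ ⊗≫ ((c a).inv ▷ (G.map (f ≫ g) ≫ i d) ≫
          (i a ≫ τ.app a) ◁ ((G.mapComp f g).hom ▷ i d ≫ (α_ (G.map f) (G.map g) (i d)).hom ≫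
            G.map f ◁ (invNat τ i u c g).hom ≫ (α_ (G.map f) (i b) (F.map g)).inv)) ⊗≫
          i a ◁ ((N τ f).inv ▷ (i b ≫ F.map g)) ⊗≫
          i a ◁ (F.map f ◁ ((u b).inv ▷ F.map g ≫ (λ_ (F.map g)).hom)) ⊗≫ 𝟙 _ := by
        rw [whisker_exchange]
    _ = 𝟙 _ ⊗≫ (c a).inv ▷ (G.map (f ≫ g) ≫ i d) ⊗≫
          i a ◁ ((τ.app a ◁ (G.mapComp f g).hom) ▷ i d) ⊗≫
          i a ◁ ((τ.app a ≫ G.map f) ◁ (invNat τ i u c g).hom ≫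
            (N τ f).inv ▷ (i b ≫ F.map g)) ⊗≫
          i a ◁ (F.map f ◁ ((u b).inv ▷ F.map g ≫ (λ_ (F.map g)).hom)) ⊗≫ 𝟙 _ := by
        bicategory
    _ = 𝟙 _ ⊗≫ (c a).inv ▷ (G.map (f ≫ g) ≫ i d) ⊗≫
          i a ◁ ((τ.app a ◁ (G.mapComp f g).hom) ▷ i d) ⊗≫
          i a ◁ ((N τ f).inv ▷ (G.map g ≫ i d) ≫
            (F.map f ≫ τ.app b) ◁ (invNat τ i u c g).hom) ⊗≫
          i a ◁ (F.map f ◁ ((u b).inv ▷ F.map g ≫ (λ_ (F.map g)).hom)) ⊗≫ 𝟙 _ := by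
        rw [whisker_exchange]
    _ = 𝟙 _ ⊗≫ (c a).inv ▷ (G.map (f ≫ g) ≫ i d) ⊗≫
          i a ◁ ((τ.app a ◁ (G.mapComp f g).hom) ▷ i d) ⊗≫
          i a ◁ ((N τ f).inv ▷ (G.map g ≫ i d)) ⊗≫
          i a ◁ (F.map f ◁ (τ.app b ◁ ((λ_ (G.map g ≫ i d)).inv ≫
            (c b).inv ▷ (G.map g ≫ i d)))) ⊗≫
          i a ◁ (F.map f ◁ (((τ.app b ≫ i b) ◁ ((N τ g).inv ▷ i d ≫
              (α_ (F.map g) (τ.app d) (i d)).hom ≫ F.map g ◁ (u d).inv ≫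
              (ρ_ (F.map g)).hom) ≫ (u b).inv ▷ F.map g) ≫ (λ_ (F.map g)).hom)) ⊗≫ 𝟙 _ := by
        rw [invNat_hom τ i u c g]; bicategory
    _ = 𝟙 _ ⊗≫ (c a).inv ▷ (G.map (f ≫ g) ≫ i d) ⊗≫
          i a ◁ ((τ.app a ◁ (G.mapComp f g).hom) ▷ i d) ⊗≫
          i a ◁ ((N τ f).inv ▷ (G.map g ≫ i d)) ⊗≫
          i a ◁ (F.map f ◁ (τ.app b ◁ ((λ_ (G.map g ≫ i d)).inv ≫
            (c b).inv ▷ (G.map g ≫ i d)))) ⊗≫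
          i a ◁ (F.map f ◁ (((u b).inv ▷ ((τ.app b ≫ G.map g) ≫ i d) ≫
              𝟙 (F.obj b) ◁ ((N τ g).inv ▷ i d ≫
              (α_ (F.map g) (τ.app d) (i d)).hom ≫ F.map g ◁ (u d).inv ≫
              (ρ_ (F.map g)).hom)) ≫ (λ_ (F.map g)).hom)) ⊗≫ 𝟙 _ := by
        rw [whisker_exchange]
    _ = 𝟙 _ ⊗≫ (c a).inv ▷ (G.map (f ≫ g) ≫ i d) ⊗≫
          i a ◁ ((τ.app a ◁ (G.mapComp f g).hom) ▷ i d) ⊗≫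
          i a ◁ ((N τ f).inv ▷ (G.map g ≫ i d)) ⊗≫
          i a ◁ (F.map f ◁ ((ρ_ (τ.app b)).inv ▷ (G.map g ≫ i d) ≫
            ((τ.app b ◁ (c b).inv ⊗≫ (u b).inv ▷ τ.app b) ▷ (G.map g ≫ i d)) ≫
            (λ_ (τ.app b)).hom ▷ (G.map g ≫ i d))) ⊗≫
          i a ◁ (F.map f ◁ ((N τ g).inv ▷ i d)) ⊗≫
          i a ◁ ((F.map f ≫ F.map g) ◁ (u d).inv) ⊗≫ 𝟙 _ := by
        bicategory
    _ = 𝟙 _ ⊗≫ (c a).inv ▷ (G.map (f ≫ g) ≫ i d) ⊗≫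
          i a ◁ ((τ.app a ◁ (G.mapComp f g).hom) ▷ i d) ⊗≫
          i a ◁ ((N τ f).inv ▷ (G.map g ≫ i d)) ⊗≫
          i a ◁ (F.map f ◁ ((ρ_ (τ.app b)).inv ▷ (G.map g ≫ i d) ≫
            (((ρ_ (τ.app b)).hom ≫ (λ_ (τ.app b)).inv) ▷ (G.map g ≫ i d)) ≫
            (λ_ (τ.app b)).hom ▷ (G.map g ≫ i d))) ⊗≫
          i a ◁ (F.map f ◁ ((N τ g).inv ▷ i d)) ⊗≫
          i a ◁ ((F.map f ≫ F.map g) ◁ (u d).inv) ⊗≫ 𝟙 _ := by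
        rw [zigzagL_inv (u b) (c b) trib]
    _ = compNF τ i u c f g := by bicategory

end Comp

lemma mod_unit {a b : B₁} (f : a ⟶ b)
    (tria : (u a).hom ▷ τ.app a ≫ (α_ (τ.app a) (i a) (τ.app a)).hom ≫
      τ.app a ◁ (c a).hom = (λ_ (τ.app a)).hom ≫ (ρ_ (τ.app a)).inv) :
    ((α_ (F.map f) (τ.app b) (i b)).inv ≫ (N τ f).hom ▷ i b ≫
        (α_ (τ.app a) (G.map f) (i b)).hom ≫ τ.app a ◁ (invNat τ i u c f).hom ≫
        (α_ (τ.app a) (i a) (F.map f)).inv) ≫ (u a).inv ▷ F.map f =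
      F.map f ◁ (u b).inv ≫ (ρ_ (F.map f)).hom ≫ (λ_ (F.map f)).inv := by
  rw [invNat_hom]
  trans (𝟙 _ ⊗≫ (N τ f).hom ▷ i b ⊗≫
      τ.app a ◁ ((λ_ (G.map f ≫ i b)).inv ≫ (c a).inv ▷ (G.map f ≫ i b)) ⊗≫
      ((τ.app a ≫ i a) ◁ ((N τ f).inv ▷ i b ≫ (α_ (F.map f) (τ.app b) (i b)).hom ≫
        F.map f ◁ (u b).inv ≫ (ρ_ (F.map f)).hom) ≫ (u a).inv ▷ F.map f) ⊗≫ 𝟙 _)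
  · bicategory
  rw [whisker_exchange]
  trans (𝟙 _ ⊗≫ (N τ f).hom ▷ i b ⊗≫
      ((ρ_ (τ.app a)).inv ▷ (G.map f ≫ i b) ≫
        ((τ.app a ◁ (c a).inv ⊗≫ (u a).inv ▷ τ.app a) ▷ (G.map f ≫ i b)) ≫
        (λ_ (τ.app a)).hom ▷ (G.map f ≫ i b)) ⊗≫
      (N τ f).inv ▷ i b ⊗≫ F.map f ◁ (u b).inv ⊗≫ 𝟙 _)
  · bicategory
  rw [zigzagL_inv (u a) (c a) tria]
  trans (𝟙 _ ⊗≫ ((N τ f).hom ≫ (N τ f).inv) ▷ i b ⊗≫ F.map f ◁ (u b).inv ⊗≫ 𝟙 _)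
  · bicategory
  rw [Iso.hom_inv_id]; bicategory

lemma mod_counit {a b : B₁} (f : a ⟶ b)
    (trib : (u b).hom ▷ τ.app b ≫ (α_ (τ.app b) (i b) (τ.app b)).hom ≫
      τ.app b ◁ (c b).hom = (λ_ (τ.app b)).hom ≫ (ρ_ (τ.app b)).inv) :
    ((α_ (G.map f) (i b) (τ.app b)).inv ≫ (invNat τ i u c f).hom ▷ τ.app b ≫
        (α_ (i a) (F.map f) (τ.app b)).hom ≫ i a ◁ (N τ f).hom ≫
        (α_ (i a) (τ.app a) (G.map f)).inv) ≫ (c a).hom ▷ G.map f =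
      G.map f ◁ (c b).hom ≫ (ρ_ (G.map f)).hom ≫ (λ_ (G.map f)).inv := by
  rw [invNat_hom]
  trans (𝟙 _ ⊗≫ (c a).inv ▷ ((G.map f ≫ i b) ≫ τ.app b) ⊗≫
      i a ◁ ((N τ f).inv ▷ (i b ≫ τ.app b)) ⊗≫
      i a ◁ (F.map f ◁ ((u b).inv ▷ τ.app b)) ⊗≫
      i a ◁ (N τ f).hom ⊗≫ (c a).hom ▷ G.map f ⊗≫ 𝟙 _)
  · bicategory
  rw [unit_whisker (u b) (c b) trib]
  trans (𝟙 _ ⊗≫ (c a).inv ▷ ((G.map f ≫ i b) ≫ τ.app b) ⊗≫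
      i a ◁ ((N τ f).inv ▷ (i b ≫ τ.app b)) ⊗≫
      i a ◁ (((F.map f ≫ τ.app b) ◁ (c b).hom ≫ (N τ f).hom ▷ 𝟙 (G.obj b)) ≫
        (ρ_ (τ.app a ≫ G.map f)).hom) ⊗≫ (c a).hom ▷ G.map f ⊗≫ 𝟙 _)
  · bicategory
  rw [whisker_exchange]
  trans (𝟙 _ ⊗≫ (c a).inv ▷ ((G.map f ≫ i b) ≫ τ.app b) ⊗≫
      i a ◁ (((N τ f).inv ≫ (N τ f).hom) ▷ (i b ≫ τ.app b)) ⊗≫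
      i a ◁ ((τ.app a ≫ G.map f) ◁ (c b).hom ≫ (ρ_ (τ.app a ≫ G.map f)).hom) ⊗≫
      (c a).hom ▷ G.map f ⊗≫ 𝟙 _)
  · bicategory
  rw [Iso.inv_hom_id]
  trans (𝟙 _ ⊗≫ ((c a).inv ▷ ((G.map f ≫ i b) ≫ τ.app b) ≫
      (i a ≫ τ.app a) ◁ ((α_ (G.map f) (i b) (τ.app b)).hom ≫
        G.map f ◁ (c b).hom ≫ (ρ_ (G.map f)).hom)) ⊗≫
      (c a).hom ▷ G.map f ⊗≫ 𝟙 _)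
  · bicategory
  rw [← whisker_exchange]
  trans (𝟙 _ ⊗≫ 𝟙 (G.obj a) ◁ ((α_ (G.map f) (i b) (τ.app b)).hom ≫
      G.map f ◁ (c b).hom ≫ (ρ_ (G.map f)).hom) ⊗≫
      ((c a).inv ≫ (c a).hom) ▷ G.map f ⊗≫ 𝟙 _)
  · bicategory
  rw [Iso.inv_hom_id]; bicategory

/-- The inverse strong natural transformation. -/
def sigma
    (tri : ∀ x : B₁, (u x).hom ▷ τ.app x ≫ (α_ (τ.app x) (i x) (τ.app x)).hom ≫
      τ.app x ◁ (c x).hom = (λ_ (τ.app x)).hom ≫ (ρ_ (τ.app x)).inv)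
    (rtri : ∀ x : B₁, i x ◁ (u x).hom ≫ (α_ (i x) (τ.app x) (i x)).inv ≫
      (c x).hom ▷ i x = (ρ_ (i x)).hom ≫ (λ_ (i x)).inv) :
    Pseudofunctor.StrongTrans G F where
  app x := i x
  naturality f := invNat τ i u c f
  naturality_naturality η := sigma_nat τ i u c η
  naturality_id a := sigma_id τ i u c a (rtri a)
  naturality_comp f g :=
    (sigma_comp_lhs τ i u c f g).trans (sigma_comp_rhs τ i u c f g (tri _)).symm

end PseudoEquivAux

open PseudoEquivAux in
/-- A strong natural transformation `τ : F ⟶ G` between pseudofunctors whose components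
`τ.app x : F x ⟶ G x` are all equivalences (i.e. parts of adjoint equivalences) is an
equivalence in the bicategory of pseudofunctors: there is a strong natural transformation
`σ : G ⟶ F` together with invertible modifications (modifications all of whose component
2-cells are invertible) between `τ ≫ σ` and the identity transformation of `F`, and
between `σ ≫ τ` and the identity transformation of `G`. -/
theorem pseudofunctor_strongNatTrans_equivalence_of_pointwise_equivalence
    {B₁ B₂ : Type*} [Bicategory B₁] [Bicategory B₂]
    (F G : Pseudofunctor B₁ B₂) (τ : F ⟶ G)
    (h : ∀ x : B₁, ∃ e : Bicategory.Equivalence (F.obj x) (G.obj x), e.hom = τ.app x) :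
    ∃ σ : G ⟶ F,
      (∃ m : Oplax.OplaxTrans.Modification (Oplax.StrongTrans.toOplax (Pseudofunctor.StrongTrans.toOplax (τ ≫ σ)))
          (Oplax.StrongTrans.toOplax (Pseudofunctor.StrongTrans.toOplax (𝟙 F))), ∀ x : B₁, IsIso (m.app x)) ∧
      (∃ m : Oplax.OplaxTrans.Modification (Oplax.StrongTrans.toOplax (Pseudofunctor.StrongTrans.toOplax (σ ≫ τ)))
          (Oplax.StrongTrans.toOplax (Pseudofunctor.StrongTrans.toOplax (𝟙 G))), ∀ x : B₁, IsIso (m.app x)) := by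
  have hx : ∀ x : B₁, ∃ (ix : G.obj x ⟶ F.obj x) (ux : 𝟙 (F.obj x) ≅ τ.app x ≫ ix)
      (cx : ix ≫ τ.app x ≅ 𝟙 (G.obj x)),
      (ux.hom ▷ τ.app x ≫ (α_ (τ.app x) ix (τ.app x)).hom ≫ τ.app x ◁ cx.hom =
        (λ_ (τ.app x)).hom ≫ (ρ_ (τ.app x)).inv) ∧
      (ix ◁ ux.hom ≫ (α_ ix (τ.app x) ix).inv ≫ cx.hom ▷ ix =
        (ρ_ ix).hom ≫ (λ_ ix).inv) := by
    intro x
    obtain ⟨e, he⟩ := h x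
    rw [← he]
    refine ⟨e.inv, e.unit, e.counit, ?_, ?_⟩
    · rw [← e.left_triangle_hom]; dsimp [Bicategory.leftZigzag]; bicategory
    · rw [← e.right_triangle_hom]; dsimp [Bicategory.rightZigzag]; bicategory
  choose i u c htri using hx
  have tri : ∀ x : B₁, (u x).hom ▷ τ.app x ≫ (α_ (τ.app x) (i x) (τ.app x)).hom ≫
      τ.app x ◁ (c x).hom = (λ_ (τ.app x)).hom ≫ (ρ_ (τ.app x)).inv := fun x => (htri x).1
  have rtri : ∀ x : B₁, i x ◁ (u x).hom ≫ (α_ (i x) (τ.app x) (i x)).inv ≫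
      (c x).hom ▷ i x = (ρ_ (i x)).hom ≫ (λ_ (i x)).inv := fun x => (htri x).2
  refine ⟨sigma τ i u c tri rtri, ⟨?_, ?_⟩, ⟨?_, ?_⟩⟩
  · exact
      { app := fun x => (u x).inv
        naturality := fun {a b} f => (mod_unit τ i u c f (tri a)).symm }
  · intro x; exact inferInstanceAs (IsIso (u x).inv)
  · exact
      { app := fun x => (c x).hom
        naturality := fun {a b} f => (mod_counit τ i u c f (tri b)).symm }
  · intro x; exact inferInstanceAs (IsIso (c x).hom)
end
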